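/- Let R > 0, M > 0, k ≥ 1, w_1, …, w_k > 0 with Σ_i w_i = 1 and μ_1, …, μ_k ∈ [−M, M], and let m_j := Σ_i w_i μ_i^j. Then for every polynomial f : ℝ → ℝ, the series Σ_{j=0}^∞ J_{f,j} · m_j converges absolutely and ∫_S f(x) · (Σ_{i=1}^k w_i g_{μ_i}(x)) dx = Σ_{j=0}^∞ J_{f,j} · m_j. -/

import Mathlib

open MeasureTheory Real Finset

/-- Probabilists' Hermite polynomial evaluated at a real number. -/
noncomputable def hermiteR (j : ℕ) (x : ℝ) : ℝ := Polynomial.aeval x (Polynomial.hermite j)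

/-- `J_{f,j} = ∫_S f(x) · (1/(√(2π)·j!)) · e^{-x²/2} · h_j(x) dx`, where `S = [-R, R]`. -/
noncomputable def Jint (R : ℝ) (f : ℝ → ℝ) (j : ℕ) : ℝ :=
  ∫ x in Set.Icc (-R) R,
    f x * (1 / (Real.sqrt (2 * π) * (Nat.factorial j))) * Real.exp (-x ^ 2 / 2) * hermiteR j x

/-- The density of the normal distribution `N(μ, 1)`. -/
noncomputable def gaussd (μ x : ℝ) : ℝ := (1 / Real.sqrt (2 * π)) * Real.exp (-(x - μ) ^ 2 / 2)

open scoped Nat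

section Aux

lemma continuous_hermiteR (j : ℕ) : Continuous (hermiteR j) :=
  Polynomial.continuous_aeval _

/-- Expansion of the Hermite polynomial with explicit coefficients. -/
lemma hermiteR_eq_sum (n : ℕ) (x : ℝ) :
    hermiteR n x = ∑ i ∈ range (n / 2 + 1),
      (-1 : ℝ) ^ i * (((2 * i - 1)‼ * n.choose (n - 2 * i) : ℕ) : ℝ) * x ^ (n - 2 * i) := by
  have h1 : hermiteR n x
      = ∑ k ∈ range (n + 1), ((Polynomial.hermite n).coeff k : ℝ) * x ^ k := by
    rw [hermiteR, Polynomial.aeval_eq_sum_range]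
    simp [Polynomial.natDegree_hermite, zsmul_eq_mul]
  have hinj : ∀ i ∈ range (n / 2 + 1), ∀ j ∈ range (n / 2 + 1),
      n - 2 * i = n - 2 * j → i = j := by
    intro i hi j hj h
    simp only [mem_range] at hi hj
    omega
  have himg : image (fun i => n - 2 * i) (range (n / 2 + 1)) ⊆ range (n + 1) := by
    intro k hk
    simp only [mem_image, mem_range] at hk ⊢
    omega
  have h2 : ∑ k ∈ range (n + 1), ((Polynomial.hermite n).coeff k : ℝ) * x ^ k
      = ∑ k ∈ image (fun i => n - 2 * i) (range (n / 2 + 1)),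
          ((Polynomial.hermite n).coeff k : ℝ) * x ^ k := by
    refine (Finset.sum_subset himg ?_).symm
    intro k hk hk'
    have hodd : Odd (n + k) := by
      rcases Nat.even_or_odd (n + k) with he | ho
      · exfalso
        apply hk'
        simp only [mem_image, mem_range]
        obtain ⟨m, hm⟩ := he
        simp only [mem_range] at hk
        exact ⟨(n - k) / 2, by omega, by omega⟩
      · exact ho
    rw [Polynomial.coeff_hermite_of_odd_add hodd]
    simp
  rw [h1, h2, Finset.sum_image hinj]
  refine Finset.sum_congr rfl fun i hi => ?_
  simp only [mem_range] at hi
  have h2i : 2 * i ≤ n := by omega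
  have heven : Even (n + (n - 2 * i)) := ⟨n - i, by omega⟩
  rw [Polynomial.coeff_hermite_of_even_add heven]
  have e1 : n - (n - 2 * i) = 2 * i := by omega
  rw [e1]
  have e2 : 2 * i / 2 = i := by omega
  rw [e2]
  push_cast
  ring

lemma hcoef_mul {n i : ℕ} (h : 2 * i ≤ n) :
    (n - 2 * i)! * i ! * 2 ^ i * ((2 * i - 1)‼ * n.choose (n - 2 * i)) = n ! := by
  have h1 : (2 * i)! = 2 ^ i * i ! * (2 * i - 1)‼ := by
    cases i with
    | zero => simp
    | succ j =>
      have : 2 * (j + 1) = (2 * j + 1) + 1 := by ring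
      rw [this, Nat.factorial_eq_mul_doubleFactorial]
      have h2 : 2 * j + 1 + 1 = 2 * (j + 1) := by ring
      rw [h2, Nat.doubleFactorial_two_mul]
      have h3 : 2 * (j + 1) - 1 = 2 * j + 1 := by omega
      rw [h3]
  have h2 := Nat.choose_mul_factorial_mul_factorial (Nat.sub_le n (2 * i))
  have h3 : n - (n - 2 * i) = 2 * i := by omega
  rw [h3] at h2
  calc (n - 2 * i)! * i ! * 2 ^ i * ((2 * i - 1)‼ * n.choose (n - 2 * i))
      = n.choose (n - 2 * i) * (n - 2 * i)! * (2 ^ i * i ! * (2 * i - 1)‼) := by ring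
    _ = n.choose (n - 2 * i) * (n - 2 * i)! * (2 * i)! := by rw [← h1]
    _ = n ! := h2

lemma hasSum_exp_real (t : ℝ) : HasSum (fun n : ℕ => t ^ n / n !) (Real.exp t) := by
  have hs := Real.summable_pow_div_factorial t
  have := hs.hasSum
  rwa [show ∑' n : ℕ, t ^ n / n ! = Real.exp t by
    rw [Real.exp_eq_exp_ℝ, NormedSpace.exp_eq_tsum_div]] at this

/-- The equivalence regrouping `ℕ × ℕ` by `(a, b) ↦ a + 2b`. -/
def regroupEquiv : (Σ n : ℕ, Fin (n / 2 + 1)) ≃ ℕ × ℕ where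
  toFun p := (p.1 - 2 * (p.2 : ℕ), (p.2 : ℕ))
  invFun q := ⟨q.1 + 2 * q.2, ⟨q.2, by omega⟩⟩
  left_inv := by
    rintro ⟨n, ⟨i, hi⟩⟩
    have h : n - 2 * i + 2 * i = n := by omega
    exact Sigma.ext h ((Fin.heq_ext_iff
      (by show (n - 2 * i + 2 * i) / 2 + 1 = n / 2 + 1; rw [h])).mpr rfl)
  right_inv := by
    rintro ⟨a, b⟩
    have h : a + 2 * b - 2 * b = a := by omega
    exact Prod.ext h rfl

set_option maxHeartbeats 1000000 in
/-- General Hermite-type generating function with a sign parameter. -/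
lemma herm_gen (x t σ : ℝ) :
    HasSum (fun n : ℕ => (∑ i ∈ range (n / 2 + 1),
        σ ^ i * (((2 * i - 1)‼ * n.choose (n - 2 * i) : ℕ) : ℝ) * x ^ (n - 2 * i))
      * (t ^ n / n !))
      (Real.exp (x * t) * Real.exp (σ * t ^ 2 / 2)) := by
  set F : ℕ × ℕ → ℝ := fun p => ((x * t) ^ p.1 / p.1 !) * ((σ * t ^ 2 / 2) ^ p.2 / p.2 !) with hF
  have hf : Summable fun a : ℕ => ‖(x * t) ^ a / (a)!‖ := by
    refine (Real.summable_pow_div_factorial |x * t|).congr fun a => ?_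
    simp only [Real.norm_eq_abs, abs_div, abs_pow, Nat.abs_cast]
  have hg : Summable fun b : ℕ => ‖(σ * t ^ 2 / 2) ^ b / (b)!‖ := by
    refine (Real.summable_pow_div_factorial |σ * t ^ 2 / 2|).congr fun b => ?_
    simp only [Real.norm_eq_abs, abs_div, abs_pow, Nat.abs_cast]
  have hs : Summable F :=
    summable_mul_of_summable_norm (f := fun a : ℕ => (x * t) ^ a / (a)!)
      (g := fun b : ℕ => (σ * t ^ 2 / 2) ^ b / (b)!) hf hg
  have hFsum : HasSum F (Real.exp (x * t) * Real.exp (σ * t ^ 2 / 2)) :=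
    HasSum.mul (hasSum_exp_real (x * t)) (hasSum_exp_real (σ * t ^ 2 / 2)) hs
  have hFe : HasSum (fun p : Σ n : ℕ, Fin (n / 2 + 1) => F (regroupEquiv p))
      (Real.exp (x * t) * Real.exp (σ * t ^ 2 / 2)) :=
    regroupEquiv.hasSum_iff.mpr hFsum
  refine hFe.sigma fun n => ?_
  have hfin := hasSum_fintype (fun i : Fin (n / 2 + 1) => F (regroupEquiv ⟨n, i⟩))
  convert hfin using 1
  have hre : (∑ b : Fin (n / 2 + 1), F (regroupEquiv ⟨n, b⟩))
      = ∑ i ∈ range (n / 2 + 1), F (n - 2 * i, i) := by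
    rw [← Fin.sum_univ_eq_sum_range (fun i => F (n - 2 * i, i)) (n / 2 + 1)]
    exact Finset.sum_congr rfl fun i _ => rfl
  rw [hre, Finset.sum_mul]
  refine (Finset.sum_congr rfl fun i hi => ?_)
  simp only [mem_range] at hi
  have h2i : 2 * i ≤ n := by omega
  have hkey : ((n - 2 * i)! * i ! * 2 ^ i : ℝ) * (((2 * i - 1)‼ * n.choose (n - 2 * i) : ℕ) : ℝ)
      = (n ! : ℝ) := by
    rw_mod_cast [hcoef_mul h2i]
  simp only [hF]
  have e1 : (x * t) ^ (n - 2 * i) = x ^ (n - 2 * i) * t ^ (n - 2 * i) := mul_pow _ _ _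
  have e2 : (σ * t ^ 2 / 2) ^ i = σ ^ i * t ^ (2 * i) / 2 ^ i := by
    rw [div_pow, mul_pow, pow_mul]
  have e3 : t ^ (n - 2 * i) * t ^ (2 * i) = t ^ n := by
    rw [← pow_add]; congr 1; omega
  have hne1 : ((n - 2 * i)! : ℝ) ≠ 0 := Nat.cast_ne_zero.mpr (Nat.factorial_ne_zero _)
  have hne2 : (i ! : ℝ) ≠ 0 := Nat.cast_ne_zero.mpr (Nat.factorial_ne_zero _)
  have hne3 : ((n)! : ℝ) ≠ 0 := Nat.cast_ne_zero.mpr (Nat.factorial_ne_zero _)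
  have hne4 : (2 : ℝ) ^ i ≠ 0 := pow_ne_zero _ two_ne_zero
  rw [e1, e2, ← e3]
  have hC : (((2 * i - 1)‼ * n.choose (n - 2 * i) : ℕ) : ℝ)
      = (n ! : ℝ) / (((n - 2 * i)! : ℝ) * (i ! : ℝ) * 2 ^ i) := by
    rw [eq_div_iff (by positivity)]
    linear_combination hkey
  rw [hC]
  field_simp

/-- Generating function for Hermite polynomials. -/
lemma hermite_hasSum (x t : ℝ) :
    HasSum (fun n : ℕ => hermiteR n x * (t ^ n / n !)) (Real.exp (x * t - t ^ 2 / 2)) := by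
  have h := herm_gen x t (-1)
  have hexp : Real.exp (x * t) * Real.exp ((-1) * t ^ 2 / 2) = Real.exp (x * t - t ^ 2 / 2) := by
    rw [← Real.exp_add]; ring_nf
  rw [hexp] at h
  have hfun : (fun n : ℕ => (∑ i ∈ range (n / 2 + 1),
      (-1 : ℝ) ^ i * (((2 * i - 1)‼ * n.choose (n - 2 * i) : ℕ) : ℝ) * x ^ (n - 2 * i))
        * (t ^ n / n !))
      = fun n : ℕ => hermiteR n x * (t ^ n / n !) :=
    funext fun n => by rw [hermiteR_eq_sum]
  rwa [hfun] at h

/-- Absolute-coefficient bound sequence. -/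
noncomputable def Bnd (R : ℝ) (n : ℕ) : ℝ :=
  ∑ i ∈ range (n / 2 + 1), (((2 * i - 1)‼ * n.choose (n - 2 * i) : ℕ) : ℝ) * R ^ (n - 2 * i)

lemma Bnd_nonneg {R : ℝ} (hR : 0 ≤ R) (n : ℕ) : 0 ≤ Bnd R n :=
  Finset.sum_nonneg fun i _ => mul_nonneg (Nat.cast_nonneg _) (pow_nonneg hR _)

lemma abs_hermiteR_le {R x : ℝ} (hx : |x| ≤ R) (n : ℕ) : |hermiteR n x| ≤ Bnd R n := by
  rw [hermiteR_eq_sum]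
  refine (Finset.abs_sum_le_sum_abs _ _).trans ?_
  refine Finset.sum_le_sum fun i _ => ?_
  rw [abs_mul, abs_mul, abs_pow, abs_pow, abs_neg, abs_one, one_pow, one_mul, Nat.abs_cast]
  refine mul_le_mul_of_nonneg_left ?_ (Nat.cast_nonneg _)
  exact pow_le_pow_left₀ (abs_nonneg x) hx _

lemma summable_Bnd (R s : ℝ) : Summable (fun n : ℕ => Bnd R n * (s ^ n / n !)) := by
  have h := herm_gen R s 1
  refine h.summable.congr fun n => ?_
  simp [Bnd]


lemma sqrt_two_pi_pos : 0 < Real.sqrt (2 * π) :=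
  Real.sqrt_pos.mpr (by positivity)

lemma integrand_bound {R C c M x : ℝ} (hcM : |c| ≤ M) {Fx : ℝ}
    (hFx : |Fx| ≤ C) (hxR : |x| ≤ R) (j : ℕ) :
    |Fx * (1 / (Real.sqrt (2 * π) * (Nat.factorial j))) * Real.exp (-x ^ 2 / 2) * hermiteR j x
        * c ^ j|
      ≤ C * (1 / (Real.sqrt (2 * π) * (Nat.factorial j))) * Bnd R j * M ^ j := by
  have hBnd := abs_hermiteR_le hxR j
  have hC : 0 ≤ C := le_trans (abs_nonneg _) hFx
  have hM : 0 ≤ M := le_trans (abs_nonneg _) hcM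
  have hBnonneg : 0 ≤ Bnd R j := le_trans (abs_nonneg _) hBnd
  have h2π := sqrt_two_pi_pos
  have ha : 0 < 1 / (Real.sqrt (2 * π) * (Nat.factorial j)) := by
    have : (0:ℝ) < (Nat.factorial j : ℝ) := by exact_mod_cast (Nat.factorial_pos j)
    positivity
  have hexp : Real.exp (-x ^ 2 / 2) ≤ 1 := by
    rw [Real.exp_le_one_iff]; nlinarith [sq_nonneg x]
  have hcj : |c| ^ j ≤ M ^ j := pow_le_pow_left₀ (abs_nonneg c) hcM j
  calc |Fx * (1 / (Real.sqrt (2 * π) * (Nat.factorial j))) * Real.exp (-x ^ 2 / 2)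
        * hermiteR j x * c ^ j|
      = |Fx| * (1 / (Real.sqrt (2 * π) * (Nat.factorial j))) * Real.exp (-x ^ 2 / 2)
        * |hermiteR j x| * |c| ^ j := by
        rw [abs_mul, abs_mul, abs_mul, abs_mul, abs_pow, abs_of_pos ha, Real.abs_exp]
    _ ≤ C * (1 / (Real.sqrt (2 * π) * (Nat.factorial j))) * 1 * Bnd R j * M ^ j := by
        gcongr
    _ = C * (1 / (Real.sqrt (2 * π) * (Nat.factorial j))) * Bnd R j * M ^ j := by ring


end Aux

/-- For every polynomial `f`, `∑_j J_{f,j} m_j` converges absolutely and equals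
`∫_S f(x) (∑_t w_t g_{μ_t}(x)) dx`, where `m_j = ∑_t w_t μ_t^j`. -/
theorem integral_eq_tsum_J_moments (R M : ℝ) (hR : 0 < R) (hM : 0 < M) (k : ℕ) (hk : 1 ≤ k)
    (w μ : Fin k → ℝ) (hw : ∀ t, 0 < w t) (hsum : ∑ t, w t = 1)
    (hμ : ∀ t, μ t ∈ Set.Icc (-M) M) (f : Polynomial ℝ) :
    Summable (fun j : ℕ => |Jint R (fun x => f.eval x) j * ∑ t, w t * μ t ^ j|) ∧
      ∫ x in Set.Icc (-R) R, f.eval x * ∑ t, w t * gaussd (μ t) x =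
        ∑' j : ℕ, Jint R (fun x => f.eval x) j * ∑ t, w t * μ t ^ j := by
  have h2π := sqrt_two_pi_pos
  set F : ℝ → ℝ := fun x => f.eval x with hFdef
  -- bound on F over the interval
  obtain ⟨C0, hC0⟩ := (isCompact_Icc : IsCompact (Set.Icc (-R) R)).exists_bound_of_continuousOn
    (Polynomial.continuous f).continuousOn
  set C : ℝ := max C0 0 with hCdef
  have hC : ∀ x ∈ Set.Icc (-R) R, |F x| ≤ C := fun x hx =>
    le_trans (hC0 x hx) (le_max_left _ _)
  have hCnonneg : (0:ℝ) ≤ C := le_max_right _ _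
  have hμM : ∀ t, |μ t| ≤ M := fun t => abs_le.mpr ⟨(hμ t).1, (hμ t).2⟩
  have hMnonneg : (0:ℝ) ≤ M := hM.le
  -- dominating summable sequence
  set E : ℕ → ℝ := fun j => (2 * R * C / Real.sqrt (2 * π)) * (Bnd R j * (M ^ j / (Nat.factorial j)))
    with hEdef
  have hE : Summable E := (summable_Bnd R M).mul_left _
  have hEeq : ∀ j : ℕ, C * (1 / (Real.sqrt (2 * π) * (Nat.factorial j))) * Bnd R j * M ^ j * (2 * R)
      = E j := by
    intro j
    have hfac : ((Nat.factorial j : ℝ)) ≠ 0 := by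
      exact_mod_cast (Nat.factorial_pos j).ne'
    rw [hEdef]
    field_simp
  have hvol : (volume (Set.Icc (-R) R)).toReal = 2 * R := by
    rw [Real.volume_Icc, ENNReal.toReal_ofReal (by linarith)]
    ring
  -- the measure of the interval is finite
  have hfin : volume (Set.Icc (-R) R) < ⊤ := measure_Icc_lt_top
  -- integrand measurability/continuity
  have hGcont : ∀ (c : ℝ) (j : ℕ), Continuous (fun x =>
      (F x * (1 / (Real.sqrt (2 * π) * (Nat.factorial j))) * Real.exp (-x ^ 2 / 2)
        * hermiteR j x) * c ^ j) := by
    intro c j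
    apply Continuous.mul _ continuous_const
    apply Continuous.mul _ (continuous_hermiteR j)
    apply Continuous.mul _ (Real.continuous_exp.comp (((continuous_pow 2).neg).div_const 2))
    exact (Polynomial.continuous f).mul continuous_const
  -- norm of the integral of each term
  have hInorm : ∀ (c : ℝ), |c| ≤ M → ∀ j : ℕ,
      (∫ x in Set.Icc (-R) R, ‖(F x * (1 / (Real.sqrt (2 * π) * (Nat.factorial j)))
        * Real.exp (-x ^ 2 / 2) * hermiteR j x) * c ^ j‖) ≤ E j := by
    intro c hc j
    have hbd : ∀ x ∈ Set.Icc (-R) R,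
        ‖(F x * (1 / (Real.sqrt (2 * π) * (Nat.factorial j))) * Real.exp (-x ^ 2 / 2)
          * hermiteR j x) * c ^ j‖
        ≤ C * (1 / (Real.sqrt (2 * π) * (Nat.factorial j))) * Bnd R j * M ^ j := by
      intro x hx
      have hxR : |x| ≤ R := abs_le.mpr ⟨hx.1, hx.2⟩
      rw [Real.norm_eq_abs]
      exact integrand_bound (R := R) hc (hC x hx) hxR j
    calc (∫ x in Set.Icc (-R) R, ‖(F x * (1 / (Real.sqrt (2 * π) * (Nat.factorial j)))
          * Real.exp (-x ^ 2 / 2) * hermiteR j x) * c ^ j‖)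
        ≤ ∫ _x in Set.Icc (-R) R,
            C * (1 / (Real.sqrt (2 * π) * (Nat.factorial j))) * Bnd R j * M ^ j := by
          refine setIntegral_mono_on ((hGcont c j).integrableOn_Icc.norm) ?_ measurableSet_Icc hbd
          exact integrableOn_const hfin.ne
      _ = C * (1 / (Real.sqrt (2 * π) * (Nat.factorial j))) * Bnd R j * M ^ j * (2 * R) := by
          rw [setIntegral_const, measureReal_def, hvol, smul_eq_mul]; ring
      _ = E j := hEeq j
  -- bound on Jint
  have hJ : ∀ j : ℕ, ∀ (c : ℝ), |c| ≤ M → |Jint R F j * c ^ j| ≤ E j := by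
    intro j c hc
    have hnorm : ‖∫ x in Set.Icc (-R) R, (F x * (1 / (Real.sqrt (2 * π) * (Nat.factorial j)))
        * Real.exp (-x ^ 2 / 2) * hermiteR j x) * c ^ j‖ ≤ E j := by
      refine le_trans (norm_integral_le_integral_norm _) (hInorm c hc j)
    have : (∫ x in Set.Icc (-R) R, (F x * (1 / (Real.sqrt (2 * π) * (Nat.factorial j)))
        * Real.exp (-x ^ 2 / 2) * hermiteR j x) * c ^ j) = Jint R F j * c ^ j := by
      rw [integral_mul_const]; rfl
    rw [this] at hnorm
    exact hnorm
  -- summability of coefficient series for each |c| ≤ M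
  have hsummableJ : ∀ (c : ℝ), |c| ≤ M → Summable (fun j => Jint R F j * c ^ j) := by
    intro c hc
    exact Summable.of_norm_bounded hE (fun j => hJ j c hc)
  -- key identity for a single Gaussian
  have key : ∀ (c : ℝ), |c| ≤ M →
      (∫ x in Set.Icc (-R) R, F x * gaussd c x) = ∑' j : ℕ, Jint R F j * c ^ j := by
    intro c hc
    set G : ℕ → ℝ → ℝ := fun j x =>
      (F x * (1 / (Real.sqrt (2 * π) * (Nat.factorial j))) * Real.exp (-x ^ 2 / 2)
        * hermiteR j x) * c ^ j with hGdef
    have hpt : ∀ x : ℝ, HasSum (fun j => G j x) (F x * gaussd c x) := by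
      intro x
      have h := (hermite_hasSum x c).mul_left
        (F x * ((1 / Real.sqrt (2 * π)) * Real.exp (-x ^ 2 / 2)))
      have hval : F x * ((1 / Real.sqrt (2 * π)) * Real.exp (-x ^ 2 / 2))
          * Real.exp (x * c - c ^ 2 / 2) = F x * gaussd c x := by
        have hexp : Real.exp (-x ^ 2 / 2) * Real.exp (x * c - c ^ 2 / 2)
            = Real.exp (-(x - c) ^ 2 / 2) := by
          rw [← Real.exp_add]; congr 1; ring
        rw [gaussd, ← hexp]; ring
      have hfun : (fun j => F x * ((1 / Real.sqrt (2 * π)) * Real.exp (-x ^ 2 / 2))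
          * (hermiteR j x * (c ^ j / (Nat.factorial j)))) = fun j => G j x := by
        funext j
        have hfac : ((Nat.factorial j : ℝ)) ≠ 0 := by
          exact_mod_cast (Nat.factorial_pos j).ne'
        rw [hGdef]
        field_simp
      rw [hval, hfun] at h
      exact h
    have hGint : ∀ j : ℕ, IntegrableOn (G j) (Set.Icc (-R) R) :=
      fun j => (hGcont c j).integrableOn_Icc
    have hGnorm : Summable (fun j => ∫ x in Set.Icc (-R) R, ‖G j x‖) := by
      refine Summable.of_nonneg_of_le (fun j => ?_) (fun j => hInorm c hc j) hE
      exact integral_nonneg fun x => norm_nonneg _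
    calc (∫ x in Set.Icc (-R) R, F x * gaussd c x)
        = ∫ x in Set.Icc (-R) R, ∑' j : ℕ, G j x :=
          integral_congr_ae (Filter.Eventually.of_forall fun x => (hpt x).tsum_eq.symm)
      _ = ∑' j : ℕ, ∫ x in Set.Icc (-R) R, G j x :=
          (integral_tsum_of_summable_integral_norm hGint hGnorm).symm
      _ = ∑' j : ℕ, Jint R F j * c ^ j := by
          refine tsum_congr fun j => ?_
          rw [hGdef]
          rw [integral_mul_const]
          rfl
  -- moment bound
  have hmom : ∀ j : ℕ, |∑ t, w t * μ t ^ j| ≤ M ^ j := by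
    intro j
    calc |∑ t, w t * μ t ^ j| ≤ ∑ t, |w t * μ t ^ j| := Finset.abs_sum_le_sum_abs _ _
      _ ≤ ∑ t, w t * M ^ j := by
          refine Finset.sum_le_sum fun t _ => ?_
          rw [abs_mul, abs_of_pos (hw t), abs_pow]
          exact mul_le_mul_of_nonneg_left (pow_le_pow_left₀ (abs_nonneg _) (hμM t) j) (hw t).le
      _ = M ^ j := by rw [← Finset.sum_mul, hsum, one_mul]
  constructor
  · -- summability
    refine Summable.of_nonneg_of_le (fun j => abs_nonneg _) (fun j => ?_) hE
    calc |Jint R F j * ∑ t, w t * μ t ^ j| = |Jint R F j| * |∑ t, w t * μ t ^ j| := abs_mul _ _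
      _ ≤ |Jint R F j| * M ^ j := by
          exact mul_le_mul_of_nonneg_left (hmom j) (abs_nonneg _)
      _ = |Jint R F j * M ^ j| := by
          rw [abs_mul, abs_of_nonneg (pow_nonneg hMnonneg j)]
      _ ≤ E j := hJ j M (by rw [abs_of_nonneg hMnonneg])
  · -- the integral identity
    have hint_t : ∀ t : Fin k, IntegrableOn (fun x => F x * gaussd (μ t) x) (Set.Icc (-R) R) := by
      intro t
      apply Continuous.integrableOn_Icc
      apply Continuous.mul (Polynomial.continuous f)
      apply Continuous.mul continuous_const
      exact Real.continuous_exp.comp (by fun_prop)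
    have split : (∫ x in Set.Icc (-R) R, F x * ∑ t, w t * gaussd (μ t) x)
        = ∑ t, w t * ∫ x in Set.Icc (-R) R, F x * gaussd (μ t) x := by
      have hptx : ∀ x : ℝ, F x * ∑ t, w t * gaussd (μ t) x
          = ∑ t, w t * (F x * gaussd (μ t) x) := by
        intro x
        rw [Finset.mul_sum]
        exact Finset.sum_congr rfl fun t _ => by ring
      simp_rw [hptx]
      rw [integral_finset_sum _ (fun t _ => ((hint_t t).const_mul (w t)))]
      exact Finset.sum_congr rfl fun t _ => integral_const_mul _ _
    rw [split]
    have hrw : ∑ t, w t * ∫ x in Set.Icc (-R) R, F x * gaussd (μ t) x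
        = ∑ t, w t * ∑' j : ℕ, Jint R F j * μ t ^ j :=
      Finset.sum_congr rfl fun t _ => by rw [key (μ t) (hμM t)]
    rw [hrw]
    calc ∑ t, w t * ∑' j : ℕ, Jint R F j * μ t ^ j
        = ∑ t, ∑' j : ℕ, w t * (Jint R F j * μ t ^ j) :=
          Finset.sum_congr rfl fun t _ => (tsum_mul_left).symm
      _ = ∑' j : ℕ, ∑ t, w t * (Jint R F j * μ t ^ j) :=
          (Summable.tsum_finsetSum fun t _ => (hsummableJ (μ t) (hμM t)).mul_left (w t)).symm
      _ = ∑' j : ℕ, Jint R F j * ∑ t, w t * μ t ^ j := by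
          refine tsum_congr fun j => ?_
          rw [Finset.mul_sum]
          exact Finset.sum_congr rfl fun t _ => by ring
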